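/- Let K be a commutative field and X = {x₁,…,x_d} a finite alphabet (d ≥ 1). A formal power series f : X* → K is rational if and only if it is recognizable, i.e. if and only if there exist n ∈ ℕ, a monoid homomorphism μ : X* → K^{n×n} (into n × n matrices under matrix multiplication), and vectors α ∈ K^{1×n}, β ∈ K^{n×1} such that (f, w) = α μ(w) β for all w ∈ X*. -/

import Mathlib

open Matrix

/-- The Cauchy (convolution) product of two formal power series in noncommuting
variables: `(f g, w) = ∑_{u v = w} (f, u) (g, v)`. -/
def seriesMul {K : Type*} [Field K] {d : ℕ} (f g : FreeMonoid (Fin d) → K) :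
    FreeMonoid (Fin d) → K := fun w =>
  ∑ n ∈ Finset.range (w.toList.length + 1),
    f (FreeMonoid.ofList (w.toList.take n)) * g (FreeMonoid.ofList (w.toList.drop n))

/-- Convolution powers of a series: `f⁰` is the characteristic series of the
empty word, and `f^{n+1} = f · fⁿ`. -/
def seriesPow {K : Type*} [Field K] {d : ℕ} (f : FreeMonoid (Fin d) → K) :
    ℕ → FreeMonoid (Fin d) → K
  | 0 => fun w => if w.toList = [] then 1 else 0
  | n + 1 => seriesMul f (seriesPow f n)

/-- The quasiinverse `f⁺ = ∑_{n ≥ 1} fⁿ` of a series `f`; for a series with zero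
constant coefficient, `(fⁿ, w) = 0` as soon as `n` exceeds the length of `w`,
so the sum may be truncated at the length of `w`. -/
def seriesQPlus {K : Type*} [Field K] {d : ℕ} (f : FreeMonoid (Fin d) → K) :
    FreeMonoid (Fin d) → K := fun w =>
  ∑ n ∈ Finset.Icc 1 w.toList.length, seriesPow f n w

/-- The set of rational series: the smallest set of series containing the
polynomials (series of finite support) and closed under scalar multiplication,
sum, product and quasiinverse (of series with zero constant coefficient). -/
inductive IsRationalSeries {K : Type*} [Field K] {d : ℕ} :
    (FreeMonoid (Fin d) → K) → Prop
  | poly (f : FreeMonoid (Fin d) → K) (hf : (Function.support f).Finite) :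
      IsRationalSeries f
  | smul (c : K) (f : FreeMonoid (Fin d) → K) (hf : IsRationalSeries f) :
      IsRationalSeries fun w => c * f w
  | add (f g : FreeMonoid (Fin d) → K) (hf : IsRationalSeries f)
      (hg : IsRationalSeries g) : IsRationalSeries fun w => f w + g w
  | mul (f g : FreeMonoid (Fin d) → K) (hf : IsRationalSeries f)
      (hg : IsRationalSeries g) : IsRationalSeries (seriesMul f g)
  | qinv (f : FreeMonoid (Fin d) → K) (hf : IsRationalSeries f) (h0 : f 1 = 0) :
      IsRationalSeries (seriesQPlus f)


section SchuetzAux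
variable {K : Type*} [Field K] {d : ℕ}
local notation "W" => FreeMonoid (Fin d)

def seriesOne : FreeMonoid (Fin d) → K := fun w => if w.toList = [] then 1 else 0

lemma seriesMul_ofList (f g : W → K) (l : List (Fin d)) :
    seriesMul f g (FreeMonoid.ofList l) =
      ∑ k ∈ Finset.range (l.length + 1),
        f (FreeMonoid.ofList (l.take k)) * g (FreeMonoid.ofList (l.drop k)) := rfl

lemma seriesMul_nil (f g : W → K) : seriesMul f g 1 = f 1 * g 1 := by
  have : (1 : W) = FreeMonoid.ofList [] := rfl
  rw [this, seriesMul_ofList]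
  simp [FreeMonoid.ofList_nil]

lemma seriesMul_cons (f g : W → K) (a : Fin d) (l : List (Fin d)) :
    seriesMul f g (FreeMonoid.ofList (a :: l)) =
      f 1 * g (FreeMonoid.ofList (a :: l)) +
        seriesMul (fun u => f (FreeMonoid.of a * u)) g (FreeMonoid.ofList l) := by
  rw [seriesMul_ofList, Finset.sum_range_succ']
  rw [seriesMul_ofList]
  simp only [List.take_succ_cons, List.drop_succ_cons, List.length_cons, List.take_zero,
    List.drop_zero, FreeMonoid.ofList_nil, FreeMonoid.ofList_cons]
  ring

lemma seriesMul_of_mul (f g : W → K) (a : Fin d) (u : W) :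
    seriesMul f g (FreeMonoid.of a * u) =
      f 1 * g (FreeMonoid.of a * u) +
        seriesMul (fun v => f (FreeMonoid.of a * v)) g u := by
  have h := seriesMul_cons f g a u.toList
  rw [FreeMonoid.ofList_toList] at h
  exact h

lemma seriesMul_add_left (f g h : W → K) (w : W) :
    seriesMul (fun w => f w + g w) h w = seriesMul f h w + seriesMul g h w := by
  simp [seriesMul, add_mul, Finset.sum_add_distrib]

lemma seriesMul_add_right (f g h : W → K) (w : W) :
    seriesMul f (fun w => g w + h w) w = seriesMul f g w + seriesMul f h w := by
  simp [seriesMul, mul_add, Finset.sum_add_distrib]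

lemma seriesMul_smul_left (c : K) (f g : W → K) (w : W) :
    seriesMul (fun w => c * f w) g w = c * seriesMul f g w := by
  simp [seriesMul, Finset.mul_sum, mul_assoc]

lemma seriesMul_sum_right {ι : Type*} (s : Finset ι) (f : W → K) (F : ι → W → K) (w : W) :
    seriesMul f (fun w => ∑ j ∈ s, F j w) w = ∑ j ∈ s, seriesMul f (F j) w := by
  simp [seriesMul, Finset.mul_sum]
  rw [Finset.sum_comm]

lemma seriesOne_mul (f : W → K) : seriesMul seriesOne f = f := by
  funext w
  rw [← FreeMonoid.ofList_toList w, seriesMul_ofList]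
  rw [Finset.sum_eq_single 0]
  · simp [seriesOne]
  · intro k hk hk0
    have hk' : k ≤ w.toList.length := Nat.lt_succ_iff.mp (Finset.mem_range.mp hk)
    have hne : w.toList ≠ [] := by
      intro h; rw [h] at hk'; exact hk0 (Nat.le_zero.mp hk')
    have : ¬ (w.toList.take k = []) := by
      simp only [List.take_eq_nil_iff, not_or]
      exact ⟨hk0, hne⟩
    simp [seriesOne, FreeMonoid.toList_ofList, this]
  · simp

lemma seriesMul_one (f : W → K) : seriesMul f seriesOne = f := by
  funext w
  rw [← FreeMonoid.ofList_toList w, seriesMul_ofList]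
  rw [Finset.sum_eq_single w.toList.length]
  · simp [seriesOne]
  · intro k hk hk0
    have hk' : k ≤ w.toList.length := Nat.lt_succ_iff.mp (Finset.mem_range.mp hk)
    have : ¬ (w.toList.drop k = []) := by
      simp only [List.drop_eq_nil_iff]
      omega
    simp [seriesOne, FreeMonoid.toList_ofList, this]
  · simp

lemma seriesMul_assoc (f g h : W → K) :
    seriesMul (seriesMul f g) h = seriesMul f (seriesMul g h) := by
  funext w
  rw [← FreeMonoid.ofList_toList w]
  generalize w.toList = l
  induction l generalizing f with
  | nil =>
      show seriesMul (seriesMul f g) h 1 = seriesMul f (seriesMul g h) 1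
      rw [seriesMul_nil, seriesMul_nil, seriesMul_nil, seriesMul_nil, mul_assoc]
  | cons a l IH =>
      rw [seriesMul_cons, seriesMul_cons, seriesMul_nil]
      have hq : (fun u => seriesMul f g (FreeMonoid.of a * u)) =
          fun u => (f 1 * g (FreeMonoid.of a * u)) +
            seriesMul (fun v => f (FreeMonoid.of a * v)) g u := by
        funext u; exact seriesMul_of_mul f g a u
      rw [hq]
      rw [seriesMul_add_left, seriesMul_smul_left, IH, seriesMul_cons]
      ring

def seriesStar (f : FreeMonoid (Fin d) → K) : FreeMonoid (Fin d) → K :=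
  fun w => seriesOne w + seriesQPlus f w

lemma seriesStar_def (f : W → K) :
    seriesStar f = fun w => (seriesOne w : K) + seriesQPlus f w := rfl

lemma seriesPow_zero (f : W → K) : seriesPow f 0 = seriesOne := rfl

lemma eq_one_of_toList_nil (w : W) (h : w.toList = []) : w = 1 := by
  rw [← FreeMonoid.ofList_toList w, h]; rfl

lemma sum_Icc_one {M : Type*} [AddCommMonoid M] (n : ℕ) (g : ℕ → M) :
    ∑ m ∈ Finset.Icc 1 n, g m = ∑ i ∈ Finset.range n, g (i + 1) := by
  rw [← Finset.Ico_add_one_right_eq_Icc, Finset.sum_Ico_eq_sum_range]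
  simp [add_comm]

lemma seriesPow_eq_zero (f : W → K) (h0 : f 1 = 0) :
    ∀ (m : ℕ) (w : W), w.toList.length < m → seriesPow f m w = 0 := by
  intro m
  induction m with
  | zero => intro w hw; exact absurd hw (Nat.not_lt_zero _)
  | succ m IH =>
      intro w hw
      show seriesMul f (seriesPow f m) w = 0
      rw [← FreeMonoid.ofList_toList w, seriesMul_ofList]
      apply Finset.sum_eq_zero
      intro k hk
      have hk' := Finset.mem_range.mp hk
      rcases Nat.eq_zero_or_pos k with h | h
      · subst h
        simp only [List.take_zero, FreeMonoid.ofList_nil, h0, zero_mul]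
      · have hlen : (w.toList.drop k).length < m := by
          rw [List.length_drop]; omega
        rw [IH (FreeMonoid.ofList (w.toList.drop k))
          (by rwa [FreeMonoid.toList_ofList]), mul_zero]

lemma seriesStar_eq_sum (f : W → K) (h0 : f 1 = 0) (m : ℕ) (v : W)
    (hv : v.toList.length < m) :
    seriesStar f v = ∑ i ∈ Finset.range m, seriesPow f i v := by
  have base : seriesStar f v = ∑ i ∈ Finset.range (v.toList.length + 1), seriesPow f i v := by
    rw [Finset.sum_range_succ']
    unfold seriesStar seriesQPlus
    rw [sum_Icc_one]
    rw [add_comm]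
    rfl
  rw [base]
  apply Finset.sum_subset
  · exact Finset.range_subset_range.mpr (by omega)
  · intro i _ hi
    apply seriesPow_eq_zero f h0
    simp only [Finset.mem_range, not_lt] at hi
    omega

lemma seriesQPlus_eq_mul_star (f : W → K) (h0 : f 1 = 0) (w : W) :
    seriesQPlus f w = seriesMul f (seriesStar f) w := by
  conv_lhs => rw [← FreeMonoid.ofList_toList w]
  conv_rhs => rw [← FreeMonoid.ofList_toList w]
  rw [seriesMul_ofList]
  have key : ∀ k ∈ Finset.range (w.toList.length + 1),
      f (FreeMonoid.ofList (w.toList.take k)) * seriesStar f (FreeMonoid.ofList (w.toList.drop k)) =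
      f (FreeMonoid.ofList (w.toList.take k)) *
        ∑ i ∈ Finset.range w.toList.length, seriesPow f i (FreeMonoid.ofList (w.toList.drop k)) := by
    intro k hk
    rcases Nat.eq_zero_or_pos k with h | h
    · subst h
      simp only [List.take_zero, FreeMonoid.ofList_nil, h0, zero_mul]
    · rw [seriesStar_eq_sum f h0 w.toList.length]
      rw [FreeMonoid.toList_ofList, List.length_drop]
      have := Finset.mem_range.mp hk
      omega
  rw [Finset.sum_congr rfl key]
  simp only [Finset.mul_sum]
  rw [Finset.sum_comm]
  have key2 : ∀ i ∈ Finset.range w.toList.length,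
      (∑ k ∈ Finset.range (w.toList.length + 1),
        f (FreeMonoid.ofList (w.toList.take k)) * seriesPow f i (FreeMonoid.ofList (w.toList.drop k)))
      = seriesPow f (i + 1) (FreeMonoid.ofList w.toList) := by
    intro i _
    show _ = seriesMul f (seriesPow f i) (FreeMonoid.ofList w.toList)
    rw [seriesMul_ofList]
  rw [Finset.sum_congr rfl key2]
  unfold seriesQPlus
  rw [sum_Icc_one]
  simp [FreeMonoid.toList_ofList]

lemma seriesStar_fix (f : W → K) (h0 : f 1 = 0) (w : W) :
    seriesStar f w = seriesOne w + seriesMul f (seriesStar f) w := by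
  conv_lhs => rw [seriesStar_def]
  rw [← seriesQPlus_eq_mul_star f h0 w]

lemma seriesQPlus_fix (f : W → K) (h0 : f 1 = 0) (w : W) :
    seriesQPlus f w = f w + seriesMul f (seriesQPlus f) w := by
  rw [seriesQPlus_eq_mul_star f h0 w, seriesStar_def, seriesMul_add_right,
    seriesMul_one]

lemma arden_unique (c h g g' : W → K) (h0 : c 1 = 0)
    (hg : ∀ w, g w = seriesMul c g w + h w) (hg' : ∀ w, g' w = seriesMul c g' w + h w) :
    g = g' := by
  have main : ∀ (n : ℕ) (w : W), w.toList.length ≤ n → g w = g' w := by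
    intro n
    induction n with
    | zero =>
        intro w hw
        have hw' : w = 1 := eq_one_of_toList_nil w (List.length_eq_zero_iff.mp (Nat.le_zero.mp hw))
        subst hw'
        rw [hg 1, hg' 1, seriesMul_nil, seriesMul_nil, h0, zero_mul, zero_mul]
    | succ n IH =>
        intro w hw
        rw [hg w, hg' w]
        congr 1
        rw [← FreeMonoid.ofList_toList w, seriesMul_ofList, seriesMul_ofList]
        apply Finset.sum_congr rfl
        intro k hk
        rcases Nat.eq_zero_or_pos k with hnull | hpos
        · subst hnull
          simp only [List.take_zero, FreeMonoid.ofList_nil, h0, zero_mul]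
        · congr 1
          apply IH
          rw [FreeMonoid.toList_ofList, List.length_drop]
          omega
  funext w
  exact main w.toList.length w le_rfl

lemma arden_sol (c h : W → K) (h0 : c 1 = 0) (w : W) :
    seriesMul (seriesStar c) h w = seriesMul c (seriesMul (seriesStar c) h) w + h w := by
  have hfix : seriesStar c = fun v => seriesOne v + seriesMul c (seriesStar c) v :=
    funext fun v => seriesStar_fix c h0 v
  conv_lhs => rw [hfix]
  rw [seriesMul_add_left, show seriesMul (seriesOne : W → K) h = h from seriesOne_mul h,
    seriesMul_assoc]
  exact add_comm _ _

lemma seriesStar_isRat (c : W → K) (hc : IsRationalSeries c) (h0 : c 1 = 0) :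
    IsRationalSeries (seriesStar c) := by
  unfold seriesStar
  apply IsRationalSeries.add
  · apply IsRationalSeries.poly
    apply Set.Finite.subset (Set.finite_singleton (1 : W))
    intro w hw
    simp only [Function.mem_support, seriesOne, ne_eq, ite_eq_right_iff, not_forall] at hw
    exact eq_one_of_toList_nil w hw.1
  · exact IsRationalSeries.qinv c hc h0


lemma isRat_zero : IsRationalSeries (fun _ : W => (0 : K)) := by
  apply IsRationalSeries.poly
  convert Set.finite_empty
  simp [Function.support]

lemma isRat_congr {f g : W → K} (h : ∀ w, f w = g w) (hf : IsRationalSeries f) :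
    IsRationalSeries g := (funext h : f = g) ▸ hf

lemma isRat_sum {ι : Type*} [DecidableEq ι] (s : Finset ι) (F : ι → W → K)
    (h : ∀ j ∈ s, IsRationalSeries (F j)) :
    IsRationalSeries (fun w => ∑ j ∈ s, F j w) := by
  induction s using Finset.induction with
  | empty => exact isRat_congr (fun w => rfl) isRat_zero
  | @insert x s' hx IH =>
      apply isRat_congr (f := fun w => F x w + ∑ j ∈ s', F j w)
      · intro w; rw [Finset.sum_insert hx]
      · exact IsRationalSeries.add _ _ (h x (Finset.mem_insert_self x s'))
          (IH fun j hj => h j (Finset.mem_insert_of_mem hj))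

lemma elimination : ∀ (n : ℕ) (c : Fin n → Fin n → (W → K)) (p g : Fin n → (W → K)),
    (∀ i j, IsRationalSeries (c i j)) → (∀ i j, c i j 1 = 0) →
    (∀ i, IsRationalSeries (p i)) →
    (∀ i w, g i w = (∑ j, seriesMul (c i j) (g j) w) + p i w) →
    ∀ i, IsRationalSeries (g i) := by
  intro n
  induction n with
  | zero => intro _ _ _ _ _ _ _ i; exact i.elim0
  | succ n IH =>
      intro c p g hc hc0 hp hsys
      set L := Fin.last n with hL
      set s : W → K := seriesStar (c L L) with hs
      have hs0 : c L L 1 = 0 := hc0 L L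
      have hsRat : IsRationalSeries s := seriesStar_isRat _ (hc L L) hs0
      set h : W → K := fun w =>
        (∑ j : Fin n, seriesMul (c L j.castSucc) (g j.castSucc) w) + p L w with hh
      have hgL : g L = seriesMul s h := by
        apply arden_unique (c L L) h _ _ hs0
        · intro w
          rw [hsys L w]
          rw [Fin.sum_univ_castSucc]
          ring
        · intro w
          exact arden_sol (c L L) h hs0 w
      set c' : Fin n → Fin n → (W → K) := fun i j w =>
        c i.castSucc j.castSucc w +
          seriesMul (seriesMul (c i.castSucc L) s) (c L j.castSucc) w with hc'def
      set p' : Fin n → (W → K) := fun i w =>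
        p i.castSucc w + seriesMul (seriesMul (c i.castSucc L) s) (p L) w with hp'def
      have hc' : ∀ i j, IsRationalSeries (c' i j) := fun i j =>
        IsRationalSeries.add _ _ (hc _ _)
          (IsRationalSeries.mul _ _ (IsRationalSeries.mul _ _ (hc _ _) hsRat) (hc _ _))
      have hc0' : ∀ i j, c' i j 1 = 0 := by
        intro i j
        show c _ _ 1 + seriesMul _ _ 1 = 0
        rw [seriesMul_nil, seriesMul_nil, hc0, hc0, zero_mul, zero_mul, add_zero]
      have hp' : ∀ i, IsRationalSeries (p' i) := fun i =>
        IsRationalSeries.add _ _ (hp _)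
          (IsRationalSeries.mul _ _ (IsRationalSeries.mul _ _ (hc _ _) hsRat) (hp _))
      have hsys' : ∀ i w, (g i.castSucc) w =
          (∑ j, seriesMul (c' i j) (g j.castSucc) w) + p' i w := by
        intro i w
        rw [hsys i.castSucc w, Fin.sum_univ_castSucc]
        have e1 : seriesMul (c i.castSucc L) (g L) w
            = seriesMul (seriesMul (c i.castSucc L) s) h w := by
          rw [hgL, ← seriesMul_assoc]
        have e2 : seriesMul (seriesMul (c i.castSucc L) s) h w
            = (∑ j : Fin n, seriesMul (seriesMul (seriesMul (c i.castSucc L) s) (c L j.castSucc))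
                (g j.castSucc) w)
              + seriesMul (seriesMul (c i.castSucc L) s) (p L) w := by
          rw [hh]
          rw [seriesMul_add_right]
          congr 1
          rw [seriesMul_sum_right]
          apply Finset.sum_congr rfl
          intro j _
          rw [← seriesMul_assoc]
        rw [e1, e2]
        have e3 : ∀ j : Fin n, seriesMul (c' i j) (g j.castSucc) w
            = seriesMul (c i.castSucc j.castSucc) (g j.castSucc) w
              + seriesMul (seriesMul (seriesMul (c i.castSucc L) s) (c L j.castSucc))
                  (g j.castSucc) w := by
          intro j
          exact seriesMul_add_left _ _ _ w
        rw [Finset.sum_congr rfl (fun j _ => e3 j), Finset.sum_add_distrib]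
        show _ = _ + (p i.castSucc w + _)
        ring
      have hgRat : ∀ j : Fin n, IsRationalSeries (g j.castSucc) :=
        IH c' p' (fun j => g j.castSucc) hc' hc0' hp' hsys'
      have hhRat : IsRationalSeries h := by
        rw [hh]
        apply IsRationalSeries.add
        · exact isRat_sum _ _ fun j _ => IsRationalSeries.mul _ _ (hc _ _) (hgRat j)
        · exact hp L
      intro i
      induction i using Fin.lastCases with
      | last => rw [hgL]; exact IsRationalSeries.mul _ _ hsRat hhRat
      | cast j => exact hgRat j

lemma recog_isRat (n : ℕ) (α : Matrix (Fin 1) (Fin n) K)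
    (μ : FreeMonoid (Fin d) →* Matrix (Fin n) (Fin n) K) (β : Matrix (Fin n) (Fin 1) K)
    (f : W → K) (hf : ∀ w, f w = (α * μ w * β) 0 0) : IsRationalSeries f := by
  set g : Fin n → W → K := fun i w => (μ w * β) i 0 with hgdef
  set c : Fin n → Fin n → W → K :=
    fun i j w => if w.toList.length = 1 then μ w i j else 0 with hcdef
  set p : Fin n → W → K := fun i w => if w.toList = [] then β i 0 else 0 with hpdef
  have hc : ∀ i j, IsRationalSeries (c i j) := by
    intro i j
    apply IsRationalSeries.poly
    apply Set.Finite.subset (Set.finite_range (fun a : Fin d => FreeMonoid.of a))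
    intro w hw
    simp only [Function.mem_support, hcdef, ne_eq, ite_eq_right_iff, not_forall] at hw
    obtain ⟨a, ha⟩ := List.length_eq_one_iff.mp hw.1
    exact ⟨a, by rw [← FreeMonoid.ofList_toList w, ha]; rfl⟩
  have hc0 : ∀ i j, c i j 1 = 0 := by
    intro i j
    show (if ((1 : W).toList.length = 1) then μ 1 i j else 0) = 0
    simp [FreeMonoid.toList_one]
  have hp : ∀ i, IsRationalSeries (p i) := by
    intro i
    apply IsRationalSeries.poly
    apply Set.Finite.subset (Set.finite_singleton (1 : W))
    intro w hw
    simp only [Function.mem_support, hpdef, ne_eq, ite_eq_right_iff, not_forall] at hw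
    exact eq_one_of_toList_nil w hw.1
  have hsys : ∀ i w, g i w = (∑ j, seriesMul (c i j) (g j) w) + p i w := by
    intro i w
    rw [← FreeMonoid.ofList_toList w]
    generalize w.toList = l
    cases l with
    | nil =>
        have hz : ∀ j : Fin n, seriesMul (c i j) (g j) (FreeMonoid.ofList []) = 0 := by
          intro j
          rw [FreeMonoid.ofList_nil, seriesMul_nil, hc0, zero_mul]
        rw [Finset.sum_congr rfl (fun j _ => hz j), Finset.sum_const_zero, zero_add]
        show (μ (FreeMonoid.ofList []) * β) i 0 = if _ then _ else _
        rw [FreeMonoid.ofList_nil, _root_.map_one μ, Matrix.one_mul]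
        simp [FreeMonoid.toList_one]
    | cons a l =>
        have hterm : ∀ j : Fin n, seriesMul (c i j) (g j) (FreeMonoid.ofList (a :: l)) =
            μ (FreeMonoid.of a) i j * g j (FreeMonoid.ofList l) := by
          intro j
          rw [seriesMul_ofList, Finset.sum_eq_single 1]
          · simp only [hcdef, List.take_succ_cons, List.take_zero, List.drop_succ_cons,
              List.drop_zero, FreeMonoid.toList_ofList, List.length_cons, List.length_nil]
            rw [if_pos trivial]
            rfl
          · intro k hk hk1
            have hkr := Finset.mem_range.mp hk
            simp only [hcdef, FreeMonoid.toList_ofList, List.length_take, List.length_cons]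
            rw [if_neg (by simp only [List.length_cons] at hkr; omega), zero_mul]
          · intro hmem
            exact absurd (Finset.mem_range.mpr (by simp only [List.length_cons]; omega)) hmem
        rw [Finset.sum_congr rfl (fun j _ => hterm j)]
        have hpz : p i (FreeMonoid.ofList (a :: l)) = 0 := by
          simp only [hpdef, FreeMonoid.toList_ofList]
          exact if_neg (by simp)
        rw [hpz, add_zero]
        show (μ (FreeMonoid.ofList (a :: l)) * β) i 0 = _
        rw [FreeMonoid.ofList_cons, _root_.map_mul μ, Matrix.mul_assoc, Matrix.mul_apply]
  have hgRat : ∀ i, IsRationalSeries (g i) := elimination n c p g hc hc0 hp hsys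
  apply isRat_congr (f := fun w => ∑ i, α 0 i * g i w)
  · intro w
    rw [hf w, Matrix.mul_assoc, Matrix.mul_apply]
  · exact isRat_sum _ _ fun i _ => IsRationalSeries.smul _ _ (hgRat i)


/-- Recognizability with an arbitrary finite index type. -/
def RecogOn (ι : Type) [Fintype ι] [DecidableEq ι] (f : FreeMonoid (Fin d) → K) : Prop :=
  ∃ (α : Matrix (Fin 1) ι K) (μ : FreeMonoid (Fin d) →* Matrix ι ι K)
    (β : Matrix ι (Fin 1) K), ∀ w, f w = (α * μ w * β) 0 0

def Recog (f : FreeMonoid (Fin d) → K) : Prop :=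
  ∃ (n : ℕ) (α : Matrix (Fin 1) (Fin n) K)
    (μ : FreeMonoid (Fin d) →* Matrix (Fin n) (Fin n) K)
    (β : Matrix (Fin n) (Fin 1) K), ∀ w, f w = (α * μ w * β) 0 0

lemma RecogOn.toRecog {ι : Type} [Fintype ι] [DecidableEq ι] {f : W → K}
    (h : RecogOn ι f) : Recog f := by
  obtain ⟨α, μ, β, hf⟩ := h
  refine ⟨Fintype.card ι, α.submatrix id (Fintype.equivFin ι).symm,
    ((Matrix.reindexAlgEquiv K K (Fintype.equivFin ι)).toRingEquiv.toRingHom.toMonoidHom).comp μ,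
    β.submatrix (Fintype.equivFin ι).symm id, ?_⟩
  intro w
  rw [hf w]
  set e := Fintype.equivFin ι
  have : ((Matrix.reindexAlgEquiv K K e).toRingEquiv.toRingHom.toMonoidHom).comp μ w
      = (μ w).submatrix e.symm e.symm := rfl
  rw [this, Matrix.submatrix_mul_equiv, Matrix.submatrix_mul_equiv]
  rfl

lemma recog_congr {f g : W → K} (h : ∀ w, f w = g w) (hf : Recog f) : Recog g :=
  (funext h : f = g) ▸ hf

lemma entry_mul_entry (P Q : Matrix (Fin 1) (Fin 1) K) :
    (P * Q) 0 0 = P 0 0 * Q 0 0 := by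
  rw [Matrix.mul_apply, Fin.sum_univ_one]

lemma recog_zero : Recog (fun _ : W => (0 : K)) := by
  refine ⟨0, 0, 1, 0, fun w => ?_⟩
  simp [Matrix.mul_apply]

lemma recog_smul (c : K) (f : W → K) (hf : Recog f) : Recog (fun w => c * f w) := by
  obtain ⟨n, α, μ, β, h⟩ := hf
  refine ⟨n, c • α, μ, β, fun w => ?_⟩
  show c * f w = _
  rw [h w, Matrix.smul_mul, Matrix.smul_mul, Matrix.smul_apply, smul_eq_mul]

lemma recog_add (f g : W → K) (hf : Recog f) (hg : Recog g) :
    Recog (fun w => f w + g w) := by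
  obtain ⟨n₁, α₁, μ₁, β₁, h₁⟩ := hf
  obtain ⟨n₂, α₂, μ₂, β₂, h₂⟩ := hg
  have : RecogOn (Fin n₁ ⊕ Fin n₂) (fun w => f w + g w) := by
    refine ⟨fromCols α₁ α₂,
      { toFun := fun w => fromBlocks (μ₁ w) 0 0 (μ₂ w)
        map_one' := by
          show fromBlocks (μ₁ 1) 0 0 (μ₂ 1) = 1
          rw [_root_.map_one, _root_.map_one, fromBlocks_one]
        map_mul' := fun u v => by
          show fromBlocks (μ₁ (u * v)) 0 0 (μ₂ (u * v)) = _
          rw [_root_.map_mul, _root_.map_mul, Matrix.fromBlocks_multiply]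
          simp },
      fromRows β₁ β₂, fun w => ?_⟩
    show f w + g w = ((fromCols α₁ α₂ * fromBlocks (μ₁ w) 0 0 (μ₂ w)) * fromRows β₁ β₂) 0 0
    rw [fromCols_mul_fromBlocks, fromCols_mul_fromRows]
    simp only [Matrix.mul_zero, add_zero, zero_add, Matrix.add_apply]
    rw [h₁ w, h₂ w]
  exact this.toRecog

lemma recog_mul (f g : W → K) (hf : Recog f) (hg : Recog g) :
    Recog (seriesMul f g) := by
  obtain ⟨n₁, α₁, μ₁, β₁, h₁⟩ := hf
  obtain ⟨n₂, α₂, μ₂, β₂, h₂⟩ := hg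
  set γ : Matrix (Fin n₁) (Fin n₂) K := β₁ * α₂ with hγ
  set M : W →* Matrix (Fin n₁ ⊕ Fin n₂) (Fin n₁ ⊕ Fin n₂) K :=
    FreeMonoid.lift (fun a =>
      fromBlocks (μ₁ (FreeMonoid.of a)) (μ₁ (FreeMonoid.of a) * γ) 0 (μ₂ (FreeMonoid.of a)))
    with hM
  set S : List (Fin d) → Matrix (Fin n₁) (Fin n₂) K := fun l =>
    ∑ k ∈ Finset.range l.length,
      μ₁ (FreeMonoid.ofList (l.take (k + 1))) * γ * μ₂ (FreeMonoid.ofList (l.drop (k + 1)))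
    with hS
  have key : ∀ l : List (Fin d), M (FreeMonoid.ofList l) =
      fromBlocks (μ₁ (FreeMonoid.ofList l)) (S l) 0 (μ₂ (FreeMonoid.ofList l)) := by
    intro l
    induction l with
    | nil =>
        rw [FreeMonoid.ofList_nil, _root_.map_one, _root_.map_one, _root_.map_one]
        simp only [hS, List.length_nil, Finset.range_zero, Finset.sum_empty]
        rw [fromBlocks_one]
    | cons a l IH =>
        have hSrec : S (a :: l) = μ₁ (FreeMonoid.of a) * S l +
            (μ₁ (FreeMonoid.of a) * γ) * μ₂ (FreeMonoid.ofList l) := by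
          simp only [hS, List.length_cons]
          rw [Finset.sum_range_succ']
          simp only [List.take_succ_cons, List.drop_succ_cons, List.take_zero, List.drop_zero,
            FreeMonoid.ofList_cons, _root_.map_mul, FreeMonoid.ofList_nil, _root_.map_one,
            mul_one, Finset.mul_sum, Matrix.mul_assoc]
          rw [Matrix.mul_sum]
        rw [FreeMonoid.ofList_cons, _root_.map_mul, IH, hSrec]
        have hMa : M (FreeMonoid.of a) = fromBlocks (μ₁ (FreeMonoid.of a))
            (μ₁ (FreeMonoid.of a) * γ) 0 (μ₂ (FreeMonoid.of a)) := by
          rw [hM]; exact FreeMonoid.lift_eval_of _ a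
        rw [hMa, Matrix.fromBlocks_multiply, _root_.map_mul, _root_.map_mul]
        simp only [Matrix.zero_mul, Matrix.mul_zero, add_zero, zero_add]
  refine RecogOn.toRecog (ι := Fin n₁ ⊕ Fin n₂) ⟨fromCols α₁ (α₁ * γ), M, fromRows 0 β₂, ?_⟩
  intro w
  conv_lhs => rw [← FreeMonoid.ofList_toList w]
  conv_rhs => rw [← FreeMonoid.ofList_toList w]
  generalize w.toList = l
  rw [seriesMul_ofList, key, fromCols_mul_fromBlocks, fromCols_mul_fromRows]
  have step1 : ∀ k, f (FreeMonoid.ofList (l.take k)) * g (FreeMonoid.ofList (l.drop k)) =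
      (α₁ * (μ₁ (FreeMonoid.ofList (l.take k)) * γ * μ₂ (FreeMonoid.ofList (l.drop k))) * β₂)
        0 0 := by
    intro k
    rw [h₁, h₂, ← entry_mul_entry, hγ]
    congr 1
    simp only [Matrix.mul_assoc]
  rw [Finset.sum_congr rfl (fun k _ => step1 k)]
  have step2 : ∑ k ∈ Finset.range (l.length + 1),
      (α₁ * (μ₁ (FreeMonoid.ofList (l.take k)) * γ * μ₂ (FreeMonoid.ofList (l.drop k))) * β₂) 0 0
      = (α₁ * (∑ k ∈ Finset.range (l.length + 1),
          μ₁ (FreeMonoid.ofList (l.take k)) * γ * μ₂ (FreeMonoid.ofList (l.drop k))) * β₂)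
        0 0 := by
    rw [Matrix.mul_sum, Matrix.sum_mul, Matrix.sum_apply]
  rw [step2]
  have step3 : (∑ k ∈ Finset.range (l.length + 1),
      μ₁ (FreeMonoid.ofList (l.take k)) * γ * μ₂ (FreeMonoid.ofList (l.drop k)))
      = S l + γ * μ₂ (FreeMonoid.ofList l) := by
    rw [Finset.sum_range_succ']
    simp only [List.take_zero, List.drop_zero, FreeMonoid.ofList_nil, _root_.map_one, one_mul,
      Matrix.one_mul, hS]
  rw [step3]
  simp only [Matrix.mul_add, Matrix.add_mul, Matrix.mul_assoc, Matrix.add_apply,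
    Matrix.zero_mul, Matrix.mul_zero, Matrix.zero_apply, zero_add, add_zero]

set_option maxHeartbeats 1000000 in
lemma recog_qplus (f : W → K) (hf : Recog f) (h0 : f 1 = 0) : Recog (seriesQPlus f) := by
  obtain ⟨n, α, μ, β, h⟩ := hf
  have h1 : (α * β) 0 0 = 0 := by
    have := h 1
    rwa [_root_.map_one, Matrix.mul_one, h0, eq_comm] at this
  set ν : W →* Matrix (Fin n) (Fin n) K := FreeMonoid.lift
    (fun a => μ (FreeMonoid.of a) + μ (FreeMonoid.of a) * (β * α)) with hν
  set T : List (Fin d) → Matrix (Fin n) (Fin n) K := fun l =>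
    ∑ k ∈ Finset.range l.length,
      μ (FreeMonoid.ofList (l.take (k + 1))) * (β * α) * ν (FreeMonoid.ofList (l.drop (k + 1)))
    with hT
  have key : ∀ l : List (Fin d),
      ν (FreeMonoid.ofList l) = μ (FreeMonoid.ofList l) + T l := by
    intro l
    induction l with
    | nil =>
        rw [FreeMonoid.ofList_nil, _root_.map_one, _root_.map_one]
        simp [hT]
    | cons a l IH =>
        have hνa : ν (FreeMonoid.of a) =
            μ (FreeMonoid.of a) + μ (FreeMonoid.of a) * (β * α) := by
          rw [hν]; exact FreeMonoid.lift_eval_of _ a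
        have hTrec : T (a :: l) = μ (FreeMonoid.of a) * T l +
            μ (FreeMonoid.of a) * (β * α) * ν (FreeMonoid.ofList l) := by
          simp only [hT, List.length_cons]
          rw [Finset.sum_range_succ']
          simp only [List.take_succ_cons, List.drop_succ_cons, List.take_zero, List.drop_zero,
            FreeMonoid.ofList_cons, _root_.map_mul, FreeMonoid.ofList_nil, _root_.map_one,
            mul_one, Matrix.mul_assoc]
          rw [Matrix.mul_sum]
        rw [FreeMonoid.ofList_cons, _root_.map_mul, _root_.map_mul, hνa, hTrec, IH]
        rw [Matrix.add_mul]
        simp only [Matrix.mul_add, Matrix.add_mul, Matrix.mul_assoc]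
        abel
  set F : W → K := fun w => (α * ν w * β) 0 0 with hF
  have hfix : ∀ w, F w = seriesMul f F w + f w := by
    intro w
    conv_lhs => rw [← FreeMonoid.ofList_toList w]
    conv_rhs => rw [← FreeMonoid.ofList_toList w]
    generalize w.toList = l
    rw [seriesMul_ofList, Finset.sum_range_succ']
    have hz : f (FreeMonoid.ofList (l.take 0)) * F (FreeMonoid.ofList (l.drop 0)) = 0 := by
      simp only [List.take_zero, FreeMonoid.ofList_nil, h0, zero_mul]
    rw [hz, add_zero]
    have step1 : ∀ k, f (FreeMonoid.ofList (l.take (k + 1))) *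
        F (FreeMonoid.ofList (l.drop (k + 1))) =
        (α * (μ (FreeMonoid.ofList (l.take (k + 1))) * (β * α) *
          ν (FreeMonoid.ofList (l.drop (k + 1)))) * β) 0 0 := by
      intro k
      rw [h, hF, ← entry_mul_entry]
      congr 1
      simp only [Matrix.mul_assoc]
    rw [Finset.sum_congr rfl (fun k _ => step1 k)]
    have step2 : ∑ k ∈ Finset.range l.length,
        (α * (μ (FreeMonoid.ofList (l.take (k + 1))) * (β * α) *
          ν (FreeMonoid.ofList (l.drop (k + 1)))) * β) 0 0
        = (α * T l * β) 0 0 := by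
      rw [hT, Matrix.mul_sum, Matrix.sum_mul, Matrix.sum_apply]
    rw [step2]
    show (α * ν (FreeMonoid.ofList l) * β) 0 0 = _
    rw [key l]
    rw [Matrix.mul_add, Matrix.add_mul, Matrix.add_apply, h]
    ring
  have hq : ∀ w, seriesQPlus f w = seriesMul f (seriesQPlus f) w + f w := by
    intro w
    rw [seriesQPlus_fix f h0 w]
    ring
  have heq : seriesQPlus f = F := arden_unique f f _ _ h0 hq hfix
  exact ⟨n, α, ν, β, fun w => by rw [heq]⟩

lemma recog_one : Recog (seriesOne : W → K) := by
  refine ⟨1, 1, FreeMonoid.lift (fun _ => (0 : Matrix (Fin 1) (Fin 1) K)), 1, fun w => ?_⟩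
  rw [Matrix.one_mul, Matrix.mul_one]
  rw [← FreeMonoid.ofList_toList w]
  generalize w.toList = l
  cases l with
  | nil =>
      rw [FreeMonoid.ofList_nil, _root_.map_one]
      simp [seriesOne, FreeMonoid.toList_one]
  | cons a l =>
      rw [FreeMonoid.ofList_cons, _root_.map_mul, FreeMonoid.lift_eval_of, Matrix.zero_mul]
      simp [seriesOne, FreeMonoid.toList_ofList]

def charSeries (u : List (Fin d)) : FreeMonoid (Fin d) → K :=
  fun w => if w.toList = u then 1 else 0

lemma charSeries_nil : (charSeries [] : W → K) = seriesOne := rfl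

lemma charSeries_cons (a : Fin d) (u : List (Fin d)) :
    (charSeries (a :: u) : W → K) = seriesMul (charSeries [a]) (charSeries u) := by
  funext w
  rw [← FreeMonoid.ofList_toList w]
  generalize w.toList = l
  cases l with
  | nil =>
      rw [FreeMonoid.ofList_nil, seriesMul_nil]
      simp [charSeries, FreeMonoid.toList_one]
  | cons b l =>
      rw [seriesMul_ofList, Finset.sum_eq_single 1]
      · simp only [charSeries, List.take_succ_cons, List.take_zero, List.drop_succ_cons,
          List.drop_zero, FreeMonoid.toList_ofList]
        by_cases hb : b = a <;> by_cases hu : l = u <;> simp [hb, hu]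
      · intro k hk hk1
        have hkr := Finset.mem_range.mp hk
        have : (FreeMonoid.ofList ((b :: l).take k)).toList ≠ [a] := by
          rw [FreeMonoid.toList_ofList]
          intro hcon
          have hlen := congrArg List.length hcon
          rw [List.length_take] at hlen
          simp at hlen
          simp only [List.length_cons] at hkr
          omega
        simp only [charSeries, if_neg this, zero_mul]
      · intro hmem
        exact absurd (Finset.mem_range.mpr (by simp only [List.length_cons]; omega)) hmem

lemma recog_letter (a : Fin d) : Recog (charSeries [a] : W → K) := by
  set Mx : Fin d → Matrix (Fin 2) (Fin 2) K :=
    fun x => !![0, if x = a then 1 else 0; 0, 0] with hMx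
  have hMM : ∀ x y, Mx x * Mx y = 0 := by
    intro x y
    ext i j
    fin_cases i <;> fin_cases j <;>
      simp [hMx, Matrix.mul_apply, Fin.sum_univ_two]
  set μ : W →* Matrix (Fin 2) (Fin 2) K := FreeMonoid.lift Mx with hμ
  have key : ∀ l : List (Fin d), μ (FreeMonoid.ofList l) =
      if l = [a] then Mx a else if l = [] then 1 else 0 := by
    intro l
    induction l with
    | nil => rw [FreeMonoid.ofList_nil, _root_.map_one]; simp
    | cons b l IH =>
        rw [FreeMonoid.ofList_cons, _root_.map_mul, IH]
        have hμb : μ (FreeMonoid.of b) = Mx b := by rw [hμ]; exact FreeMonoid.lift_eval_of _ b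
        rw [hμb]
        by_cases hl : l = []
        · subst hl
          rw [if_neg (show ¬([] : List (Fin d)) = [a] by simp), if_pos rfl, mul_one]
          by_cases hb : b = a
          · subst hb; simp
          · rw [if_neg (show ¬([b] = [a]) by simp [hb]),
              if_neg (show ¬([b] = ([] : List (Fin d))) by simp)]
            ext i j
            fin_cases i <;> fin_cases j <;> simp [hMx, hb]
        · have hne : ¬(b :: l = [a]) := by simp [hl]
          have hne2 : ¬(b :: l = []) := by simp
          rw [if_neg hne, if_neg hne2]
          by_cases hla : l = [a]
          · rw [if_pos hla, hMM]
          · rw [if_neg hla, if_neg hl, Matrix.mul_zero]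
  have entry : ∀ X : Matrix (Fin 2) (Fin 2) K,
      ((!![1, 0] : Matrix (Fin 1) (Fin 2) K) * X * (!![0; 1] : Matrix (Fin 2) (Fin 1) K)) 0 0
        = X 0 1 := by
    intro X
    simp [Matrix.mul_apply, Matrix.vecMul, dotProduct, Matrix.vecHead, Fin.sum_univ_two]
  refine ⟨2, !![1, 0], μ, !![0; 1], fun w => ?_⟩
  rw [entry, ← FreeMonoid.ofList_toList w, key]
  simp only [charSeries, FreeMonoid.toList_ofList]
  by_cases h1 : w.toList = [a]
  · simp only [if_pos h1]
    simp [hMx, h1]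
  · simp only [if_neg h1]
    by_cases h2 : w.toList = []
    · simp only [if_pos h2]
      simp [Matrix.one_apply, h1]
    · simp only [if_neg h2]
      simp [h1]

lemma recog_char (u : List (Fin d)) : Recog (charSeries u : W → K) := by
  induction u with
  | nil => rw [charSeries_nil]; exact recog_one
  | cons a u IH => rw [charSeries_cons]; exact recog_mul _ _ (recog_letter a) IH

lemma recog_finsum {ι : Type*} [DecidableEq ι] (s : Finset ι) (F : ι → W → K)
    (h : ∀ j ∈ s, Recog (F j)) : Recog (fun w => ∑ j ∈ s, F j w) := by
  induction s using Finset.induction with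
  | empty => exact recog_congr (fun w => rfl) recog_zero
  | @insert x s' hx IH =>
      apply recog_congr (f := fun w => F x w + ∑ j ∈ s', F j w)
      · intro w; rw [Finset.sum_insert hx]
      · exact recog_add _ _ (h x (Finset.mem_insert_self x s'))
          (IH fun j hj => h j (Finset.mem_insert_of_mem hj))

lemma recog_poly (f : W → K) (hf : (Function.support f).Finite) : Recog f := by
  classical
  apply recog_congr (f := fun w => ∑ u ∈ hf.toFinset, f u * charSeries u.toList w)
  · intro w
    rw [Finset.sum_eq_single w]
    · simp [charSeries]
    · intro u hu hne
      have : ¬(w.toList = u.toList) := by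
        intro hcon
        apply hne
        rw [← FreeMonoid.ofList_toList u, ← FreeMonoid.ofList_toList w, hcon]
      simp [charSeries, this]
    · intro hw
      have : f w = 0 := by
        by_contra hcon
        exact hw (hf.mem_toFinset.mpr (Function.mem_support.mpr hcon))
      rw [this, zero_mul]
  · exact recog_finsum _ _ fun u _ => recog_smul _ _ (recog_char u.toList)


end SchuetzAux

/-- Schützenberger's theorem: a formal power series in noncommuting variables is
rational if and only if it is recognizable, i.e. `(f, w) = α μ(w) β` for a monoid
homomorphism `μ : X* → K^{n×n}` and vectors `α ∈ K^{1×n}`, `β ∈ K^{n×1}`. -/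
theorem rational_iff_recognizable {K : Type*} [Field K] {d : ℕ} (hd : 1 ≤ d)
    (f : FreeMonoid (Fin d) → K) :
    IsRationalSeries f ↔
      ∃ (n : ℕ) (α : Matrix (Fin 1) (Fin n) K)
        (μ : FreeMonoid (Fin d) →* Matrix (Fin n) (Fin n) K)
        (β : Matrix (Fin n) (Fin 1) K),
        ∀ w, f w = (α * μ w * β) 0 0 := by
  constructor
  · intro h
    induction h with
    | poly f hf => exact recog_poly f hf
    | smul c f hf IH => exact recog_smul c f IH
    | add f g hf hg IHf IHg => exact recog_add f g IHf IHg
    | mul f g hf hg IHf IHg => exact recog_mul f g IHf IHg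
    | qinv f hf h0 IH => exact recog_qplus f IH h0
  · rintro ⟨n, α, μ, β, h⟩
    exact recog_isRat n α μ β f h
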